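/- arXiv:math/0309135 — 7 statements merged into one kernel-verified Lean document; each statement's English description precedes it below -/
import Mathlib

section
/- Let n ≥ 1 and let π be a permutation of {1, …, n+1}. Then π is Baxter if and only if for every i ∈ {1, …, n} there is exactly one j ∈ {1, …, n} such that (i,j) is a box for π. -/
/-- `(i,j)` is a box for the permutation `π` with inverse `σ`:
`min(π i, π (i+1)) ≤ j < max(π i, π (i+1))` and `min(σ j, σ (j+1)) ≤ i < max(σ j, σ (j+1))`. -/
def IsBox (π σ : ℕ → ℕ) (i j : ℕ) : Prop :=
  min (π i) (π (i+1)) ≤ j ∧ j < max (π i) (π (i+1)) ∧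
  min (σ j) (σ (j+1)) ≤ i ∧ i < max (σ j) (σ (j+1))

instance (π σ : ℕ → ℕ) (i j : ℕ) : Decidable (IsBox π σ i j) := by
  unfold IsBox; infer_instance

/-- A box `(i,j)` is windmilled if exactly one of `π i > j` and `σ j > i` holds. -/
def Windmilled (π σ : ℕ → ℕ) (i j : ℕ) : Prop :=
  IsBox π σ i j ∧ Xor' (j < π i) (i < σ j)

instance (π σ : ℕ → ℕ) (i j : ℕ) : Decidable (Windmilled π σ i j) := by
  unfold Windmilled Xor'; infer_instance

/-- The matrix `A(π)`: `-1` on windmilled boxes, `1` on non-windmilled boxes, `0` elsewhere. -/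
def AMat (π σ : ℕ → ℕ) (i j : ℕ) : ℤ :=
  if Windmilled π σ i j then -1 else if IsBox π σ i j then 1 else 0

/-- Baxter condition (dividing-line form) for a permutation `π` of `{1, …, n+1}`
with inverse `σ`. -/
def IsBaxter (n : ℕ) (π σ : ℕ → ℕ) : Prop :=
  ∀ i ∈ Finset.Icc 1 n,
    ∃ c, min (π i) (π (i+1)) ≤ c ∧ c < max (π i) (π (i+1)) ∧
      ∀ d, min (π i) (π (i+1)) < d → d < max (π i) (π (i+1)) →
        (π i < π (i+1) → (d ≤ c → σ d < i) ∧ (c < d → σ d > i + 1)) ∧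
        (π (i+1) < π i → (d ≤ c → σ d > i + 1) ∧ (c < d → σ d < i))

lemma baxter_row_aux (n i : ℕ) (π : Equiv.Perm ℕ)
    (hπ : ∀ k ∈ Finset.Icc 1 (n+1), π k ∈ Finset.Icc 1 (n+1))
    (hi1 : 1 ≤ i) (hi2 : i ≤ n) :
    (∃ c, min (π i) (π (i+1)) ≤ c ∧ c < max (π i) (π (i+1)) ∧
      ∀ d, min (π i) (π (i+1)) < d → d < max (π i) (π (i+1)) →
        (π i < π (i+1) → (d ≤ c → π.symm d < i) ∧ (c < d → π.symm d > i + 1)) ∧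
        (π (i+1) < π i → (d ≤ c → π.symm d > i + 1) ∧ (c < d → π.symm d < i))) ↔
      (∃! j, j ∈ Finset.Icc 1 n ∧ IsBox (⇑π) (⇑π.symm) i j) := by
  have ha := hπ i (by simp [Finset.mem_Icc]; omega)
  have hb := hπ (i+1) (by simp [Finset.mem_Icc]; omega)
  simp only [Finset.mem_Icc] at ha hb
  have hsa : π.symm (π i) = i := π.symm_apply_apply i
  have hsb : π.symm (π (i+1)) = i+1 := π.symm_apply_apply (i+1)
  have hab : π i ≠ π (i+1) := fun h => by have := π.injective h; omega
  have hboxiff : ∀ j, IsBox (⇑π) (⇑π.symm) i j ↔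
      (min (π i) (π (i+1)) ≤ j ∧ j < max (π i) (π (i+1)) ∧
        ((π.symm j ≤ i) ↔ ¬ (π.symm (j+1) ≤ i))) := by
    intro j
    have hne : π.symm j ≠ π.symm (j+1) := fun hh => by
      have := π.symm.injective hh; omega
    unfold IsBox; omega
  have hint : ∀ d, min (π i) (π (i+1)) < d → d < max (π i) (π (i+1)) →
      π.symm d ≠ i ∧ π.symm d ≠ i + 1 := by
    intro d h1 h2
    constructor
    · intro h
      have h3 : π (π.symm d) = d := π.apply_symm_apply d
      rw [h] at h3; omega
    · intro h
      have h3 : π (π.symm d) = d := π.apply_symm_apply d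
      rw [h] at h3; omega
  constructor
  · rintro ⟨c, hc1, hc2, hc3⟩
    rcases hab.lt_or_gt with h | h
    · have hkey : ∀ d, min (π i) (π (i+1)) ≤ d → d ≤ max (π i) (π (i+1)) →
          ((π.symm d ≤ i) ↔ d ≤ c) := by
        intro d h1 h2
        by_cases hd : d = π i
        · rw [hd, hsa]; omega
        · by_cases hd' : d = π (i+1)
          · rw [hd', hsb]; omega
          · obtain ⟨h4, _⟩ := hc3 d (by omega) (by omega)
            obtain ⟨hL, hR⟩ := h4 h
            rcases le_or_gt d c with h' | h'
            · have := hL h'; omega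
            · have := hR h'; omega
      refine ⟨c, ⟨Finset.mem_Icc.mpr (by omega), ?_⟩, ?_⟩
      · rw [hboxiff]
        have h5 := hkey c (by omega) (by omega)
        have h6 := hkey (c+1) (by omega) (by omega)
        omega
      · rintro y ⟨hy1, hy2⟩
        rw [hboxiff] at hy2
        obtain ⟨hr1, hr2, hr3⟩ := hy2
        have h5 := hkey y (by omega) (by omega)
        have h6 := hkey (y+1) (by omega) (by omega)
        omega
    · have hkey : ∀ d, min (π i) (π (i+1)) ≤ d → d ≤ max (π i) (π (i+1)) →
          ((π.symm d ≤ i) ↔ c < d) := by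
        intro d h1 h2
        by_cases hd : d = π i
        · rw [hd, hsa]; omega
        · by_cases hd' : d = π (i+1)
          · rw [hd', hsb]; omega
          · obtain ⟨_, h4⟩ := hc3 d (by omega) (by omega)
            obtain ⟨hL, hR⟩ := h4 h
            rcases le_or_gt d c with h' | h'
            · have := hL h'; omega
            · have := hR h'; omega
      refine ⟨c, ⟨Finset.mem_Icc.mpr (by omega), ?_⟩, ?_⟩
      · rw [hboxiff]
        have h5 := hkey c (by omega) (by omega)
        have h6 := hkey (c+1) (by omega) (by omega)
        omega
      · rintro y ⟨hy1, hy2⟩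
        rw [hboxiff] at hy2
        obtain ⟨hr1, hr2, hr3⟩ := hy2
        have h5 := hkey y (by omega) (by omega)
        have h6 := hkey (y+1) (by omega) (by omega)
        omega
  · rintro ⟨j₀, ⟨hj₀m, hj₀b⟩, huniq⟩
    rw [hboxiff] at hj₀b
    obtain ⟨hr1, hr2, hx⟩ := hj₀b
    have hnoch : ∀ j, min (π i) (π (i+1)) ≤ j → j < max (π i) (π (i+1)) → j ≠ j₀ →
        ((π.symm j ≤ i) ↔ (π.symm (j+1) ≤ i)) := by
      intro j h1 h2 hne
      by_contra hcon
      have hbj : IsBox (⇑π) (⇑π.symm) i j := (hboxiff j).mpr ⟨h1, h2, by tauto⟩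
      exact hne (huniq j ⟨Finset.mem_Icc.mpr (by omega), hbj⟩)
    have hA : ∀ d, min (π i) (π (i+1)) ≤ d → d ≤ j₀ →
        ((π.symm d ≤ i) ↔ (π.symm (min (π i) (π (i+1))) ≤ i)) := by
      intro d hd1
      induction d, hd1 using Nat.le_induction with
      | base => intro _; tauto
      | succ d hd ih =>
        intro hd2
        have h1 := hnoch d hd (by omega) (by omega)
        have h2 := ih (by omega)
        omega
    have hB2 : ∀ d, j₀ + 1 ≤ d → d ≤ max (π i) (π (i+1)) →
        ((π.symm d ≤ i) ↔ (π.symm (j₀+1) ≤ i)) := by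
      intro d hd1
      induction d, hd1 using Nat.le_induction with
      | base => intro _; tauto
      | succ d hd ih =>
        intro hd2
        have h1 := hnoch d (by omega) (by omega) (by omega)
        have h2 := ih (by omega)
        omega
    have hAj := hA j₀ hr1 le_rfl
    rcases hab.lt_or_gt with h | h
    · have hsmin : π.symm (min (π i) (π (i+1))) = i := by
        rw [min_eq_left h.le, hsa]
      refine ⟨j₀, by omega, by omega, ?_⟩
      intro d hd1 hd2
      constructor
      · intro _
        constructor
        · intro hdc
          have h5 := hA d (by omega) hdc
          have h6 := hint d hd1 hd2
          omega
        · intro hdc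
          have h5 := hB2 d (by omega) (by omega)
          have h6 := hint d hd1 hd2
          omega
      · intro h'; omega
    · have hsmin : π.symm (min (π i) (π (i+1))) = i + 1 := by
        rw [min_eq_right h.le, hsb]
      refine ⟨j₀, by omega, by omega, ?_⟩
      intro d hd1 hd2
      constructor
      · intro h'; omega
      · intro _
        constructor
        · intro hdc
          have h5 := hA d (by omega) hdc
          have h6 := hint d hd1 hd2
          omega
        · intro hdc
          have h5 := hB2 d (by omega) (by omega)
          have h6 := hint d hd1 hd2
          omega

theorem stmt0 (n : ℕ) (hn : 1 ≤ n) (π : Equiv.Perm ℕ)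
    (hπ : ∀ k ∈ Finset.Icc 1 (n+1), π k ∈ Finset.Icc 1 (n+1)) :
    IsBaxter n (⇑π) (⇑π.symm) ↔
      ∀ i ∈ Finset.Icc 1 n, ∃! j, j ∈ Finset.Icc 1 n ∧ IsBox (⇑π) (⇑π.symm) i j := by
  unfold IsBaxter
  constructor
  · intro hh i hi
    obtain ⟨h1, h2⟩ := Finset.mem_Icc.mp hi
    exact (baxter_row_aux n i π hπ h1 h2).mp (hh i hi)
  · intro hh i hi
    obtain ⟨h1, h2⟩ := Finset.mem_Icc.mp hi
    exact (baxter_row_aux n i π hπ h1 h2).mpr (hh i hi)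
end

section
/- Let n ≥ 1 and let π be a permutation of {1, …, n+1}. For every j ∈ {1, …, n}, the number of i ∈ {1, …, n} such that (i,j) is a box for π is odd (in particular it is at least 1). -/
theorem stmt3 (n : ℕ) (hn : 1 ≤ n) (π : Equiv.Perm ℕ)
    (hπ : ∀ k ∈ Finset.Icc 1 (n+1), π k ∈ Finset.Icc 1 (n+1))
    (j : ℕ) (hj : j ∈ Finset.Icc 1 n) :
    Odd ((Finset.Icc 1 n).filter (fun i => IsBox (⇑π) (⇑π.symm) i j)).card ∧
    1 ≤ ((Finset.Icc 1 n).filter (fun i => IsBox (⇑π) (⇑π.symm) i j)).card := by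
  have hσ : ∀ k ∈ Finset.Icc 1 (n+1), π.symm k ∈ Finset.Icc 1 (n+1) := by
    have himg : (Finset.Icc 1 (n+1)).image π = Finset.Icc 1 (n+1) := by
      apply Finset.eq_of_subset_of_card_le
      · intro x hx
        simp only [Finset.mem_image] at hx
        obtain ⟨m, hm, rfl⟩ := hx
        exact hπ m hm
      · rw [Finset.card_image_of_injective _ π.injective]
    intro k hk
    rw [← himg] at hk
    simp only [Finset.mem_image] at hk
    obtain ⟨m, hm, hmk⟩ := hk
    rwa [← hmk, Equiv.symm_apply_apply]
  simp only [Finset.mem_Icc] at hj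
  set a := min (π.symm j) (π.symm (j+1)) with ha
  set b := max (π.symm j) (π.symm (j+1)) with hb
  have hja : π.symm j ∈ Finset.Icc 1 (n+1) := hσ j (by simp only [Finset.mem_Icc]; omega)
  have hjb : π.symm (j+1) ∈ Finset.Icc 1 (n+1) := hσ (j+1) (by simp only [Finset.mem_Icc]; omega)
  simp only [Finset.mem_Icc] at hja hjb
  have hne : π.symm j ≠ π.symm (j+1) := fun h => by
    have := π.symm.injective h; omega
  have hab : a < b := by omega
  have ha1 : 1 ≤ a := by omega
  have hbn : b ≤ n+1 := by omega
  have hfe : (Finset.Icc 1 n).filter (fun i => IsBox (⇑π) (⇑π.symm) i j)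
      = (Finset.Ico a b).filter (fun i => ¬ (π i ≤ j ↔ π (i+1) ≤ j)) := by
    ext i
    simp only [Finset.mem_filter, Finset.mem_Icc, Finset.mem_Ico, IsBox, ← ha, ← hb]
    constructor
    · rintro ⟨⟨h1, h2⟩, h3, h4, h5, h6⟩
      exact ⟨⟨h5, h6⟩, by omega⟩
    · rintro ⟨⟨h1, h2⟩, h3⟩
      exact ⟨⟨by omega, by omega⟩, by omega, by omega, h1, h2⟩
  set g : ℕ → ZMod 2 := fun i => if π i ≤ j then 1 else 0 with hg
  have tel : ∀ b', a ≤ b' → ∑ i ∈ Finset.Ico a b', (g (i+1) - g i) = g b' - g a := by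
    intro b' hb'
    induction b', hb' using Nat.le_induction with
    | base => simp
    | succ m hm ih => rw [Finset.sum_Ico_succ_top hm, ih]; ring
  have hterm : ∀ i, (if ¬ (π i ≤ j ↔ π (i+1) ≤ j) then (1 : ZMod 2) else 0)
      = g (i+1) - g i := by
    intro i
    by_cases h1 : π i ≤ j <;> by_cases h2 : π (i+1) ≤ j <;>
      simp [hg, h1, h2] <;> decide
  have hkey : ((((Finset.Icc 1 n).filter (fun i => IsBox (⇑π) (⇑π.symm) i j)).card : ℕ)
      : ZMod 2) = 1 := by
    rw [hfe, Finset.card_filter, Nat.cast_sum]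
    have : ∀ i ∈ Finset.Ico a b,
        ((if ¬ (π i ≤ j ↔ π (i+1) ≤ j) then (1:ℕ) else 0 : ℕ) : ZMod 2)
        = g (i+1) - g i := by
      intro i _
      rw [← hterm i]
      split <;> simp
    rw [Finset.sum_congr rfl this, tel b (le_of_lt hab)]
    have hgj : g (π.symm j) = 1 := by
      simp only [hg, Equiv.apply_symm_apply, le_refl, if_true]
    have hgj1 : g (π.symm (j+1)) = 0 := by
      simp only [hg, Equiv.apply_symm_apply]
      rw [if_neg (by omega)]
    rcases le_total (π.symm j) (π.symm (j+1)) with h | h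
    · rw [hb, ha, max_eq_right h, min_eq_left h, hgj1, hgj]; decide
    · rw [hb, ha, max_eq_left h, min_eq_right h, hgj, hgj1]; decide
  have hmod : ((Finset.Icc 1 n).filter (fun i => IsBox (⇑π) (⇑π.symm) i j)).card % 2 = 1 := by
    set c := ((Finset.Icc 1 n).filter (fun i => IsBox (⇑π) (⇑π.symm) i j)).card
    have h2 : ((c % 2 : ℕ) : ZMod 2) = 1 := by
      rw [ZMod.natCast_mod, hkey]
    have : c % 2 = 0 ∨ c % 2 = 1 := by omega
    rcases this with h | h
    · rw [h] at h2; simp at h2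
    · exact h
  constructor
  · exact Nat.odd_iff.mpr hmod
  · omega
end

section
/- Let n ≥ 1 and let π be a permutation of {1, …, n+1}. Then the matrix A(π) is an alternating sign matrix: in each of its rows and each of its columns, the nonzero entries alternate in sign and sum to 1. -/
/-- A line (row or column) of an order-`n` alternating sign matrix, entries indexed by
`{1, …, n}`: entries lie in `{-1, 0, 1}`, sum to `1`, and consecutive nonzero entries
alternate in sign. -/
def AltLine (n : ℕ) (v : ℕ → ℤ) : Prop :=
  (∀ j ∈ Finset.Icc 1 n, v j = -1 ∨ v j = 0 ∨ v j = 1) ∧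
  (∑ j ∈ Finset.Icc 1 n, v j) = 1 ∧
  ∀ j₁ ∈ Finset.Icc 1 n, ∀ j₂ ∈ Finset.Icc 1 n, j₁ < j₂ → v j₁ ≠ 0 → v j₂ ≠ 0 →
    (∀ k ∈ Finset.Icc 1 n, j₁ < k → k < j₂ → v k = 0) → v j₂ = -v j₁

def Hfun (σ : ℕ → ℕ) (i j : ℕ) : ℤ := if σ j ≤ i then 1 else 0

lemma AMat_eq (π σ : ℕ → ℕ) (i j : ℕ) :
    AMat π σ i j =
      if min (π i) (π (i+1)) ≤ j ∧ j < max (π i) (π (i+1)) then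
        (if π i < π (i+1) then Hfun σ i j - Hfun σ i (j+1)
         else Hfun σ i (j+1) - Hfun σ i j)
      else 0 := by
  unfold AMat Windmilled IsBox Xor' Xor Hfun
  split_ifs <;> omega

lemma AMat_comm (π σ : ℕ → ℕ) (i j : ℕ) : AMat π σ i j = AMat σ π j i := by
  unfold AMat Windmilled IsBox Xor' Xor
  split_ifs <;> omega

lemma tele (f : ℕ → ℤ) {m M : ℕ} (h : m ≤ M) :
    ∑ j ∈ Finset.Ico m M, (f (j+1) - f j) = f M - f m := by
  induction M, h using Nat.le_induction with
  | base => simp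
  | succ M hM ih => rw [Finset.sum_Ico_succ_top (by omega), ih]; ring

lemma rowAlt (n : ℕ) (π : Equiv.Perm ℕ)
    (hπ : ∀ k ∈ Finset.Icc 1 (n+1), π k ∈ Finset.Icc 1 (n+1))
    (i : ℕ) (hi : i ∈ Finset.Icc 1 n) :
    AltLine n (fun j => AMat (⇑π) (⇑π.symm) i j) := by
  simp only [Finset.mem_Icc] at hi
  have ha : π i ∈ Finset.Icc 1 (n+1) := hπ i (by simp only [Finset.mem_Icc]; omega)
  have hb : π (i+1) ∈ Finset.Icc 1 (n+1) := hπ (i+1) (by simp only [Finset.mem_Icc]; omega)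
  simp only [Finset.mem_Icc] at ha hb
  have hab : π i ≠ π (i+1) := fun h => by have := π.injective h; omega
  set a := π i with ha'
  set b := π (i+1) with hb'
  have hσa : π.symm a = i := π.symm_apply_apply i
  have hσb : π.symm b = i + 1 := π.symm_apply_apply (i+1)
  have hHa : Hfun (⇑π.symm) i a = 1 := by unfold Hfun; rw [hσa]; simp
  have hHb : Hfun (⇑π.symm) i b = 0 := by unfold Hfun; rw [hσb]; simp
  have hmM : min a b < max a b := by omega
  have hsub : Finset.Ico (min a b) (max a b) ⊆ Finset.Icc 1 n := by
    intro x hx; simp only [Finset.mem_Ico, Finset.mem_Icc] at hx ⊢; omega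
  refine ⟨?_, ?_, ?_⟩
  · intro j _
    simp only [AMat_eq]
    unfold Hfun
    split_ifs <;> omega
  · rw [← Finset.sum_subset hsub (by
      intro x _ hx
      simp only [Finset.mem_Ico] at hx
      simp only [AMat_eq]
      rw [if_neg (by omega)])]
    have : ∀ j ∈ Finset.Ico (min a b) (max a b),
        AMat (⇑π) (⇑π.symm) i j =
        (if a < b then Hfun (⇑π.symm) i j - Hfun (⇑π.symm) i (j+1)
         else Hfun (⇑π.symm) i (j+1) - Hfun (⇑π.symm) i j) := by
      intro j hj
      simp only [Finset.mem_Ico] at hj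
      simp only [AMat_eq]
      rw [if_pos (by omega)]
    rw [Finset.sum_congr rfl this]
    by_cases hlt : a < b
    · simp only [if_pos hlt]
      have hm : min a b = a := by omega
      have hM : max a b = b := by omega
      rw [hm, hM]
      have : ∑ j ∈ Finset.Ico a b, (Hfun (⇑π.symm) i j - Hfun (⇑π.symm) i (j+1))
          = -∑ j ∈ Finset.Ico a b, (Hfun (⇑π.symm) i (j+1) - Hfun (⇑π.symm) i j) := by
        rw [← Finset.sum_neg_distrib]; apply Finset.sum_congr rfl; intro x _; ring
      rw [this, tele _ (le_of_lt hlt), hHa, hHb]; ring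
    · simp only [if_neg hlt]
      have hm : min a b = b := by omega
      have hM : max a b = a := by omega
      rw [hm, hM, tele _ (by omega : b ≤ a), hHa, hHb]; ring
  · intro j₁ hj₁ j₂ hj₂ hlt hne₁ hne₂ hz
    simp only [Finset.mem_Icc] at hj₁ hj₂
    simp only [AMat_eq] at hne₁ hne₂
    by_cases hc₁ : min a b ≤ j₁ ∧ j₁ < max a b
    swap
    · rw [if_neg hc₁] at hne₁; exact absurd rfl hne₁
    by_cases hc₂ : min a b ≤ j₂ ∧ j₂ < max a b
    swap
    · rw [if_neg hc₂] at hne₂; exact absurd rfl hne₂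
    rw [if_pos hc₁] at hne₁
    rw [if_pos hc₂] at hne₂
    have const : ∀ k, j₁ + 1 ≤ k → k ≤ j₂ → Hfun (⇑π.symm) i (j₁+1) = Hfun (⇑π.symm) i k := by
      intro k hk1
      induction k, hk1 using Nat.le_induction with
      | base => intro _; rfl
      | succ k hk ih =>
        intro hk2
        have h0 := hz k (by simp only [Finset.mem_Icc]; omega) (by omega) (by omega)
        simp only [AMat_eq] at h0
        rw [if_pos (by omega : min a b ≤ k ∧ k < max a b)] at h0
        have hkk : Hfun (⇑π.symm) i k = Hfun (⇑π.symm) i (k+1) := by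
          split_ifs at h0 <;> omega
        rw [ih (by omega), hkk]
    have hH := const j₂ (by omega) le_rfl
    simp only [AMat_eq, if_pos hc₁, if_pos hc₂]
    unfold Hfun at hne₁ hne₂ hH ⊢
    split_ifs at hne₁ hne₂ hH ⊢ <;> omega

theorem stmt5 (n : ℕ) (hn : 1 ≤ n) (π : Equiv.Perm ℕ)
    (hπ : ∀ k ∈ Finset.Icc 1 (n+1), π k ∈ Finset.Icc 1 (n+1)) :
    (∀ i ∈ Finset.Icc 1 n, AltLine n (fun j => AMat (⇑π) (⇑π.symm) i j)) ∧
    (∀ j ∈ Finset.Icc 1 n, AltLine n (fun i => AMat (⇑π) (⇑π.symm) i j)) := by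
  have himg : (Finset.Icc 1 (n+1)).image (⇑π) = Finset.Icc 1 (n+1) := by
    apply Finset.eq_of_subset_of_card_le
    · intro x hx
      obtain ⟨y, hy, rfl⟩ := Finset.mem_image.mp hx
      exact hπ y hy
    · rw [Finset.card_image_of_injective _ π.injective]
  have hσ : ∀ k ∈ Finset.Icc 1 (n+1), π.symm k ∈ Finset.Icc 1 (n+1) := by
    intro k hk
    rw [← himg] at hk
    obtain ⟨y, hy, rfl⟩ := Finset.mem_image.mp hk
    rwa [π.symm_apply_apply]
  constructor
  · intro i hi; exact rowAlt n π hπ i hi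
  · intro j hj
    have h := rowAlt n π.symm hσ j hj
    have heq : (fun i => AMat (⇑π) (⇑π.symm) i j)
        = (fun k => AMat (⇑π.symm) (⇑π.symm.symm) j k) := by
      funext k
      rw [Equiv.symm_symm]
      exact AMat_comm (⇑π) (⇑π.symm) k j
    rw [heq]
    exact h
end

section
/- Let n ≥ 1, let π be a permutation of {1, …, n+1}, and fix j ∈ {1, …, n}. Let i_1 < i_2 < … < i_r be the complete list of indices i such that (i,j) is a box for π. Then for each t ∈ {1, …, r}, the box (i_t,j) is windmilled if and only if t is even. In particular r is odd and the first and last boxes in column j are non-windmilled. -/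
set_option maxHeartbeats 1000000

lemma core (P : ℕ → Prop) [DecidablePred P] (lo : ℕ) (k : ℕ) :
    (∀ t (h : t < ((List.range' lo k).filter (fun i => decide (¬(P i ↔ P (i+1))))).length),
      (P (((List.range' lo k).filter (fun i => decide (¬(P i ↔ P (i+1)))))[t]) ↔ (P lo ↔ Even t)))
    ∧ (Even ((List.range' lo k).filter (fun i => decide (¬(P i ↔ P (i+1))))).length
        ↔ (P lo ↔ P (lo + k))) := by
  induction k with
  | zero => simp
  | succ k IH =>
    obtain ⟨IHA, IHB⟩ := IH
    have hr : List.range' lo (k+1) = List.range' lo k ++ [lo+k] := by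
      simpa using List.range'_concat (step := 1) (s := lo) (n := k)
    have hsucc : lo + (k+1) = (lo+k)+1 := by omega
    rw [hr, List.filter_append, hsucc]
    set L := (List.range' lo k).filter (fun i => decide (¬(P i ↔ P (i+1)))) with hLdef
    by_cases hf : ¬(P (lo+k) ↔ P (lo+k+1))
    · have hfil : List.filter (fun i => decide (¬(P i ↔ P (i+1)))) [lo+k] = [lo+k] := by
        simp [hf]
      rw [hfil]
      constructor
      · intro t h
        rw [List.length_append, List.length_singleton] at h
        rcases Nat.lt_succ_iff_lt_or_eq.mp h with h' | h'
        · rw [List.getElem_append_left h']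
          exact IHA t h'
        · subst h'
          rw [List.getElem_concat_length rfl]
          rw [IHB] at *
          by_cases h1 : P lo <;> by_cases h2 : P (lo+k) <;> simp_all
      · rw [List.length_append, List.length_singleton, Nat.even_add_one, IHB]
        by_cases h1 : P lo <;> by_cases h2 : P (lo+k) <;> by_cases h3 : P (lo+k+1) <;> simp_all
    · have hf' := not_not.mp hf
      have hfil : List.filter (fun i => decide (¬(P i ↔ P (i+1)))) [lo+k] = [] := by
        simp [hf']
      rw [hfil, List.append_nil]
      refine ⟨IHA, ?_⟩
      rw [IHB]
      by_cases h1 : P lo <;> by_cases h2 : P (lo+k) <;> by_cases h3 : P (lo+k+1) <;> simp_all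

lemma sort_eq_of_mem (s : Finset ℕ) (L : List ℕ) (hL : L.Pairwise (· < ·))
    (h : ∀ i, i ∈ s ↔ i ∈ L) : s.sort (· ≤ ·) = L := by
  have hnd : L.Nodup := hL.imp ne_of_lt
  have hs : s = L.toFinset := by ext i; simp [h i]
  rw [hs]
  exact (List.toFinset_sort _ hnd).mpr (hL.imp le_of_lt)


theorem stmt7 (n : ℕ) (hn : 1 ≤ n) (π : Equiv.Perm ℕ)
    (hπ : ∀ k ∈ Finset.Icc 1 (n+1), π k ∈ Finset.Icc 1 (n+1))
    (j : ℕ) (hj : j ∈ Finset.Icc 1 n)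
    (l : List ℕ)
    (hl : l = ((Finset.Icc 1 n).filter (fun i => IsBox (⇑π) (⇑π.symm) i j)).sort (· ≤ ·)) :
    (∀ t (ht : t < l.length), (Windmilled (⇑π) (⇑π.symm) (l.get ⟨t, ht⟩) j ↔ Odd t)) ∧
    Odd l.length ∧
    (∀ i, l.head? = some i → ¬ Windmilled (⇑π) (⇑π.symm) i j) ∧
    (∀ i, l.getLast? = some i → ¬ Windmilled (⇑π) (⇑π.symm) i j) := by
  simp only [Finset.mem_Icc] at hj
  have hσ : ∀ m ∈ Finset.Icc 1 (n+1), π.symm m ∈ Finset.Icc 1 (n+1) := by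
    have hsub : (Finset.Icc 1 (n+1)).image π ⊆ Finset.Icc 1 (n+1) :=
      Finset.image_subset_iff.mpr hπ
    have heq : (Finset.Icc 1 (n+1)).image π = Finset.Icc 1 (n+1) :=
      Finset.eq_of_subset_of_card_le hsub
        (by rw [Finset.card_image_of_injective _ π.injective])
    intro m hm
    rw [← heq] at hm
    obtain ⟨x, hx, hxm⟩ := Finset.mem_image.mp hm
    rwa [show π.symm m = x from by rw [← hxm]; simp]
  set a := π.symm j with ha
  set b := π.symm (j+1) with hb
  have hπa : π a = j := π.apply_symm_apply j
  have hπb : π b = j+1 := π.apply_symm_apply (j+1)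
  have hab : a ≠ b := by intro h; rw [h, hπb] at hπa; omega
  have haI : a ∈ Finset.Icc 1 (n+1) := hσ j (by simp only [Finset.mem_Icc]; omega)
  have hbI : b ∈ Finset.Icc 1 (n+1) := hσ (j+1) (by simp only [Finset.mem_Icc]; omega)
  simp only [Finset.mem_Icc] at haI hbI
  set P : ℕ → Prop := fun i => π i ≤ j with hP
  have hPdec : DecidablePred P := fun i => by rw [hP]; infer_instance
  set lo := min a b with hlo
  set hi := max a b with hhi
  have hbox : ∀ i, IsBox (⇑π) (⇑π.symm) i j ↔
      (i ∈ List.range' lo (hi - lo) ∧ decide (¬(P i ↔ P (i+1))) = true) := by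
    intro i
    rw [List.mem_range'_1]
    simp only [decide_eq_true_eq, IsBox, hP, ← ha, ← hb]
    omega
  have hL : l = (List.range' lo (hi - lo)).filter (fun i => decide (¬(P i ↔ P (i+1)))) := by
    rw [hl]
    apply sort_eq_of_mem
    · exact (List.pairwise_lt_range' (s := lo) (n := hi - lo)).sublist List.filter_sublist |>.imp id
    · intro i
      simp only [Finset.mem_filter, Finset.mem_Icc, List.mem_filter]
      constructor
      · rintro ⟨-, hbx⟩
        exact (hbox i).mp hbx
      · rintro ⟨hr, hp⟩
        refine ⟨?_, (hbox i).mpr ⟨hr, hp⟩⟩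
        have := List.mem_range'_1.mp hr
        omega
  subst hL
  set L := (List.range' lo (hi - lo)).filter (fun i => decide (¬(P i ↔ P (i+1)))) with hLdef
  obtain ⟨CA, CB⟩ := core P lo (hi - lo)
  have hk : lo + (hi - lo) = hi := by omega
  rw [hk] at CB
  have hPa : P a := by simp only [hP]; omega
  have hPb : ¬ P b := by simp only [hP]; omega
  have hPloPhi : ¬ (P lo ↔ P hi) := by
    rcases lt_or_gt_of_ne hab with h | h
    · rw [show lo = a from by omega, show hi = b from by omega]; tauto
    · rw [show lo = b from by omega, show hi = a from by omega]; tauto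
  have hodd : Odd L.length := by
    rw [← Nat.not_even_iff_odd, CB]; exact hPloPhi
  have main : ∀ t (ht : t < L.length), (Windmilled (⇑π) (⇑π.symm) L[t] j ↔ Odd t) := by
    intro t ht
    have hmem : L[t] ∈ L := List.getElem_mem ht
    obtain ⟨hr, hp⟩ := List.mem_filter.mp hmem
    have hbx : IsBox (⇑π) (⇑π.symm) L[t] j := (hbox _).mpr ⟨hr, hp⟩
    have hio := List.mem_range'_1.mp hr
    have hCA := CA t ht
    have h2 : (j < π L[t]) ↔ ¬ P L[t] := by simp only [hP]; omega
    simp only [Windmilled, Xor', ← ha, ← Nat.not_even_iff_odd]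
    rcases lt_or_gt_of_ne hab with h | h
    · have hlt : ¬ (L[t] < a) := by omega
      have hPlo : P lo := by rw [show lo = a from by omega]; exact hPa
      have hQE : P L[t] ↔ Even t := by rw [hCA]; tauto
      constructor
      · rintro ⟨-, (⟨hjp, -⟩ | ⟨hlt', -⟩)⟩
        · exact fun hE => (h2.mp hjp) (hQE.mpr hE)
        · exact absurd hlt' hlt
      · intro hne
        exact ⟨hbx, Or.inl ⟨h2.mpr (fun hQ => hne (hQE.mp hQ)), hlt⟩⟩
    · have hlt : L[t] < a := by omega
      have hPlo : ¬ P lo := by rw [show lo = b from by omega]; exact hPb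
      have hQE : P L[t] ↔ ¬ Even t := by rw [hCA]; tauto
      constructor
      · rintro ⟨-, (⟨-, hlt'⟩ | ⟨-, hjp⟩)⟩
        · exact absurd hlt hlt'
        · have hQ : P L[t] := by by_contra hq; exact hjp (h2.mpr hq)
          exact hQE.mp hQ
      · intro hne
        exact ⟨hbx, Or.inr ⟨hlt, fun hjp => (h2.mp hjp) (hQE.mpr hne)⟩⟩
  refine ⟨?_, hodd, ?_, ?_⟩
  · intro t ht
    simpa using main t ht
  · intro i hhead
    have hlen : 0 < L.length := by
      rcases hodd with ⟨m, hm⟩; omega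
    have h0 : L[0] = i := by
      rw [List.head?_eq_getElem?, List.getElem?_eq_getElem hlen] at hhead
      exact Option.some_injective _ hhead
    rw [← h0, main 0 hlen]
    simp
  · intro i hlast
    have hlen : 0 < L.length := by
      rcases hodd with ⟨m, hm⟩; omega
    rw [List.getLast?_eq_getElem?] at hlast
    have hl1 : L.length - 1 < L.length := by omega
    have : L[L.length - 1] = i := by
      rw [List.getElem?_eq_getElem hl1] at hlast
      exact Option.some_injective _ hlast
    rw [← this, main _ hl1]
    rw [Nat.odd_iff] at hodd ⊢
    omega
end

section
/- Let n ≥ 1 and let π be a permutation of {1, …, n+1} that is not Baxter. Then there exist i, j ∈ {1, …, n} such that (i,j) is a windmilled box for π; equivalently, the matrix A(π) contains at least one entry equal to −1. -/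
private lemma cross_aux0 (P Q : ℕ → Prop) :
    ∀ m d1, P d1 → Q (d1 + m + 1) → (∀ d, d1 ≤ d → d ≤ d1 + m + 1 → P d ∨ Q d) →
    ∃ j, d1 ≤ j ∧ j < d1 + m + 1 ∧ P j ∧ Q (j + 1) := by
  intro m
  induction m with
  | zero => intro d1 h1 h2 _; exact ⟨d1, le_refl _, by omega, h1, h2⟩
  | succ m ih =>
    intro d1 h1 h2 hd
    by_cases hq : Q (d1 + 1)
    · exact ⟨d1, le_refl _, by omega, h1, hq⟩
    · have hp : P (d1 + 1) := by
        rcases hd (d1 + 1) (by omega) (by omega) with h | h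
        · exact h
        · exact absurd h hq
      have he : d1 + (m + 1) + 1 = (d1 + 1) + m + 1 := by omega
      obtain ⟨j, hj1, hj2, hj3, hj4⟩ := ih (d1 + 1) hp (he ▸ h2)
        (fun d hd1 hd2 => hd d (by omega) (by omega))
      exact ⟨j, by omega, by omega, hj3, hj4⟩

private lemma cross_aux (P Q : ℕ → Prop) (d1 d2 : ℕ) (hlt : d1 < d2) (h1 : P d1)
    (h2 : Q d2) (hd : ∀ d, d1 ≤ d → d ≤ d2 → P d ∨ Q d) :
    ∃ j, d1 ≤ j ∧ j < d2 ∧ P j ∧ Q (j + 1) := by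
  have e : d1 + (d2 - d1 - 1) + 1 = d2 := by omega
  obtain ⟨j, hj1, hj2, hj3, hj4⟩ := cross_aux0 P Q (d2 - d1 - 1) d1 h1
    (by rw [e]; exact h2) (fun d a b => hd d a (by omega))
  exact ⟨j, hj1, by omega, hj3, hj4⟩

theorem stmt9 (n : ℕ) (hn : 1 ≤ n) (π : Equiv.Perm ℕ)
    (hπ : ∀ k ∈ Finset.Icc 1 (n+1), π k ∈ Finset.Icc 1 (n+1))
    (hbax : ¬ IsBaxter n (⇑π) (⇑π.symm)) :
    (∃ i ∈ Finset.Icc 1 n, ∃ j ∈ Finset.Icc 1 n, Windmilled (⇑π) (⇑π.symm) i j) ∧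
    (∃ i ∈ Finset.Icc 1 n, ∃ j ∈ Finset.Icc 1 n, AMat (⇑π) (⇑π.symm) i j = -1) := by
  classical
  set σ : ℕ → ℕ := ⇑π.symm with hσ
  obtain ⟨i, hi, hfail⟩ : ∃ i ∈ Finset.Icc 1 n,
      ¬ (∃ c, min (π i) (π (i+1)) ≤ c ∧ c < max (π i) (π (i+1)) ∧
        ∀ d, min (π i) (π (i+1)) < d → d < max (π i) (π (i+1)) →
          (π i < π (i+1) → (d ≤ c → σ d < i) ∧ (c < d → σ d > i + 1)) ∧
          (π (i+1) < π i → (d ≤ c → σ d > i + 1) ∧ (c < d → σ d < i))) := by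
    by_contra h
    push_neg at h
    exact hbax h
  rw [Finset.mem_Icc] at hi
  have hia : π i ∈ Finset.Icc 1 (n+1) := hπ i (Finset.mem_Icc.mpr ⟨hi.1, by omega⟩)
  have hib : π (i+1) ∈ Finset.Icc 1 (n+1) := hπ (i+1) (Finset.mem_Icc.mpr ⟨by omega, by omega⟩)
  rw [Finset.mem_Icc] at hia hib
  have hσa : σ (π i) = i := π.symm_apply_apply i
  have hσb : σ (π (i+1)) = i + 1 := π.symm_apply_apply (i+1)
  have hne : π i ≠ π (i+1) := fun h => by
    have := π.injective h; omega
  have hdich : ∀ d, d ≠ π i → d ≠ π (i+1) → σ d < i ∨ i + 1 < σ d := by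
    intro d h1 h2
    have e1 : σ d ≠ i := by
      intro h
      apply h1
      have : π (σ d) = π i := congrArg π h
      rwa [hσ, π.apply_symm_apply] at this
    have e2 : σ d ≠ i + 1 := by
      intro h
      apply h2
      have : π (σ d) = π (i+1) := congrArg π h
      rwa [hσ, π.apply_symm_apply] at this
    omega
  -- produce the windmilled box
  suffices hw : ∃ j ∈ Finset.Icc 1 n, Windmilled (⇑π) σ i j by
    obtain ⟨j, hj, hwj⟩ := hw
    have hmem : i ∈ Finset.Icc 1 n := Finset.mem_Icc.mpr hi
    refine ⟨⟨i, hmem, j, hj, hwj⟩, ⟨i, hmem, j, hj, ?_⟩⟩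
    unfold AMat
    rw [if_pos hwj]
  rcases hne.lt_or_gt with hab | hab
  · -- π i < π (i+1)
    have hmin : min (π i) (π (i+1)) = π i := min_eq_left hab.le
    have hmax : max (π i) (π (i+1)) = π (i+1) := max_eq_right hab.le
    have hpair : ∃ d1 d2, π i < d1 ∧ d1 < d2 ∧ d2 < π (i+1) ∧ i + 1 < σ d1 ∧ σ d2 < i := by
      by_contra hpn
      push_neg at hpn
      apply hfail
      set S : Finset ℕ := (Finset.Ioo (π i) (π (i+1))).filter (fun d => σ d < i) with hS
      by_cases hSne : S.Nonempty
      · obtain ⟨c, hcmem, hcmax⟩ : ∃ c ∈ S, ∀ x ∈ S, x ≤ c :=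
          ⟨S.max' hSne, S.max'_mem hSne, fun x hx => S.le_max' x hx⟩
        rw [hS, Finset.mem_filter, Finset.mem_Ioo] at hcmem
        have hcS := hcmem
        refine ⟨c, by omega, by omega, ?_⟩
        intro d hd1 hd2
        rw [hmin] at hd1; rw [hmax] at hd2
        refine ⟨fun _ => ⟨?_, ?_⟩, fun h => absurd h (by omega)⟩
        · intro hdc
          rcases eq_or_lt_of_le hdc with h | h
          · rw [h]; exact hcS.2
          · by_contra hcon
            have : i + 1 < σ d := by
              rcases hdich d (by omega) (by omega) with h' | h'
              · omega
              · exact h'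
            have := hpn d c (by omega) h hcS.1.2 this
            omega
        · intro hcd
          rcases hdich d (by omega) (by omega) with h' | h'
          · exfalso
            have hdS : d ∈ S := by
              rw [hS, Finset.mem_filter, Finset.mem_Ioo]
              exact ⟨⟨hd1, hd2⟩, h'⟩
            have := hcmax d hdS
            omega
          · exact h'
      · refine ⟨π i, by omega, by omega, ?_⟩
        intro d hd1 hd2
        rw [hmin] at hd1; rw [hmax] at hd2
        refine ⟨fun _ => ⟨fun h => by omega, fun _ => ?_⟩, fun h => absurd h (by omega)⟩
        rcases hdich d (by omega) (by omega) with h' | h'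
        · exfalso
          exact hSne ⟨d, by rw [hS, Finset.mem_filter, Finset.mem_Ioo]; exact ⟨⟨hd1, hd2⟩, h'⟩⟩
        · exact h'
    obtain ⟨d1, d2, h1, h2, h3, h4, h5⟩ := hpair
    obtain ⟨j, hj1, hj2, hj3, hj4⟩ := cross_aux (fun d => i + 1 < σ d) (fun d => σ d < i)
      d1 d2 h2 h4 h5
      (fun d hd1 hd2 => by
        rcases hdich d (by omega) (by omega) with h | h
        · exact Or.inr h
        · exact Or.inl h)
    have hjd2 : j + 1 ≤ d2 := by omega
    refine ⟨j, Finset.mem_Icc.mpr ⟨by omega, by omega⟩, ⟨⟨?_, ?_, ?_, ?_⟩, ?_⟩⟩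
    · omega
    · omega
    · omega
    · omega
    · exact Or.inr ⟨by omega, by omega⟩
  · -- π (i+1) < π i
    have hmin : min (π i) (π (i+1)) = π (i+1) := min_eq_right hab.le
    have hmax : max (π i) (π (i+1)) = π i := max_eq_left hab.le
    have hpair : ∃ d1 d2, π (i+1) < d1 ∧ d1 < d2 ∧ d2 < π i ∧ σ d1 < i ∧ i + 1 < σ d2 := by
      by_contra hpn
      push_neg at hpn
      apply hfail
      set S : Finset ℕ := (Finset.Ioo (π (i+1)) (π i)).filter (fun d => i + 1 < σ d) with hS
      by_cases hSne : S.Nonempty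
      · obtain ⟨c, hcmem, hcmax⟩ : ∃ c ∈ S, ∀ x ∈ S, x ≤ c :=
          ⟨S.max' hSne, S.max'_mem hSne, fun x hx => S.le_max' x hx⟩
        rw [hS, Finset.mem_filter, Finset.mem_Ioo] at hcmem
        have hcS := hcmem
        refine ⟨c, by omega, by omega, ?_⟩
        intro d hd1 hd2
        rw [hmin] at hd1; rw [hmax] at hd2
        refine ⟨fun h => absurd h (by omega), fun _ => ⟨?_, ?_⟩⟩
        · intro hdc
          rcases eq_or_lt_of_le hdc with h | h
          · rw [h]; exact hcS.2
          · by_contra hcon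
            have : σ d < i := by
              rcases hdich d (by omega) (by omega) with h' | h'
              · exact h'
              · omega
            have := hpn d c (by omega) h hcS.1.2 this
            omega
        · intro hcd
          rcases hdich d (by omega) (by omega) with h' | h'
          · exact h'
          · exfalso
            have hdS : d ∈ S := by
              rw [hS, Finset.mem_filter, Finset.mem_Ioo]
              exact ⟨⟨hd1, hd2⟩, h'⟩
            have := hcmax d hdS
            omega
      · refine ⟨π (i+1), by omega, by omega, ?_⟩
        intro d hd1 hd2
        rw [hmin] at hd1; rw [hmax] at hd2
        refine ⟨fun h => absurd h (by omega), fun _ => ⟨fun h => by omega, fun _ => ?_⟩⟩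
        rcases hdich d (by omega) (by omega) with h' | h'
        · exact h'
        · exfalso
          exact hSne ⟨d, by rw [hS, Finset.mem_filter, Finset.mem_Ioo]; exact ⟨⟨hd1, hd2⟩, h'⟩⟩
    obtain ⟨d1, d2, h1, h2, h3, h4, h5⟩ := hpair
    obtain ⟨j, hj1, hj2, hj3, hj4⟩ := cross_aux (fun d => σ d < i) (fun d => i + 1 < σ d)
      d1 d2 h2 h4 h5
      (fun d hd1 hd2 => by
        rcases hdich d (by omega) (by omega) with h | h
        · exact Or.inl h
        · exact Or.inr h)
    have hjd2 : j + 1 ≤ d2 := by omega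
    refine ⟨j, Finset.mem_Icc.mpr ⟨by omega, by omega⟩, ⟨⟨?_, ?_, ?_, ?_⟩, ?_⟩⟩
    · omega
    · omega
    · omega
    · omega
    · exact Or.inl ⟨by omega, by omega⟩
end

section
/- Let n ≥ 1 and let π be a permutation of {1, …, n+1}. Then π is Baxter if and only if there is no pair (i,j) with 1 ≤ i, j ≤ n that is a windmilled box for π; equivalently, π is Baxter if and only if the matrix A(π) contains no entry equal to −1. -/
/-- Threshold lemma: if a property `R` is "upward closed" on the interval `(a,b)`, then
there is a cutoff `c` with `¬R` below and `R` above. -/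
lemma thresh (a b : ℕ) (hab : a < b) (R : ℕ → Prop)
    (mono : ∀ d, a < d → d + 1 < b → R d → R (d+1)) :
    ∃ c, a ≤ c ∧ c < b ∧ ∀ d, a < d → d < b → (d ≤ c → ¬ R d) ∧ (c < d → R d) := by
  classical
  have mono' : ∀ e, e < b → ∀ d, a < d → d ≤ e → R d → R e := by
    intro e
    induction e with
    | zero => intro _ d had hde _; exact absurd (lt_of_lt_of_le had hde) (Nat.not_lt_zero a)
    | succ e ih =>
      intro hb d had hde hRd
      rcases Nat.eq_or_lt_of_le hde with h | h
      · exact h ▸ hRd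
      · exact mono e (by omega) hb (ih (by omega) d had (by omega) hRd)
  by_cases H : ∃ d, a < d ∧ d < b ∧ R d
  · have hd₀ := Nat.find_spec H
    set d₀ := Nat.find H with hd₀def
    refine ⟨d₀ - 1, by omega, by omega, ?_⟩
    intro d hd1 hd2
    constructor
    · intro hdc hRd
      exact Nat.find_min H (show d < d₀ by omega) ⟨hd1, hd2, hRd⟩
    · intro hcd
      exact mono' d hd2 d₀ hd₀.1 (by omega) hd₀.2.2
  · refine ⟨b - 1, by omega, by omega, ?_⟩
    intro d hd1 hd2
    exact ⟨fun _ hRd => H ⟨d, hd1, hd2, hRd⟩, fun h => absurd h (by omega)⟩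

theorem stmt12 (n : ℕ) (hn : 1 ≤ n) (π : Equiv.Perm ℕ)
    (hπ : ∀ k ∈ Finset.Icc 1 (n+1), π k ∈ Finset.Icc 1 (n+1)) :
    (IsBaxter n (⇑π) (⇑π.symm) ↔
      ¬ ∃ i ∈ Finset.Icc 1 n, ∃ j ∈ Finset.Icc 1 n, Windmilled (⇑π) (⇑π.symm) i j) ∧
    (IsBaxter n (⇑π) (⇑π.symm) ↔
      ¬ ∃ i ∈ Finset.Icc 1 n, ∃ j ∈ Finset.Icc 1 n, AMat (⇑π) (⇑π.symm) i j = -1) := by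
  have key : IsBaxter n (⇑π) (⇑π.symm) ↔
      ¬ ∃ i ∈ Finset.Icc 1 n, ∃ j ∈ Finset.Icc 1 n, Windmilled (⇑π) (⇑π.symm) i j := by
    constructor
    · -- Baxter → no windmilled box
      rintro hB ⟨i, hi, j, hj, ⟨hb1, hb2, hb3, hb4⟩, hx⟩
      obtain ⟨c, hc1, hc2, hc3⟩ := hB i hi
      simp only [Finset.mem_Icc] at hi hj
      have hne : π i ≠ π (i+1) := fun h => by have := π.injective h; omega
      rcases Nat.lt_or_ge (π i) (π (i+1)) with hab | hge
      · -- ascending case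
        rcases hx with ⟨h, h'⟩ | ⟨hσj, h'⟩
        · omega
        have hjne : j ≠ π i := by
          intro hh; rw [hh, Equiv.symm_apply_apply] at hσj; omega
        have h6 : π.symm (j+1) ≤ i := by omega
        have h7 : j + 1 ≠ π (i+1) := by
          intro hh; rw [hh, Equiv.symm_apply_apply] at h6; omega
        have H1 := (hc3 j (by omega) (by omega)).1 hab
        have H2 := (hc3 (j+1) (by omega) (by omega)).1 hab
        rcases le_or_gt j c with h | h
        · have := H1.1 h; omega
        · have := H2.2 (by omega); omega
      · have hba : π (i+1) < π i := by omega
        rcases hx with ⟨h, hσj⟩ | ⟨h, h'⟩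
        swap
        · omega
        have hσj' : π.symm j ≤ i := by omega
        have hjne : j ≠ π (i+1) := by
          intro hh; rw [hh, Equiv.symm_apply_apply] at hσj'; omega
        have h6 : i < π.symm (j+1) := by omega
        have h7 : j + 1 ≠ π i := by
          intro hh; rw [hh, Equiv.symm_apply_apply] at h6; omega
        have H1 := (hc3 j (by omega) (by omega)).2 hba
        have H2 := (hc3 (j+1) (by omega) (by omega)).2 hba
        rcases le_or_gt j c with h | h
        · have := H1.1 h; omega
        · have := H2.2 (by omega); omega
    · -- no windmilled box → Baxter
      intro hnw i hi
      simp only [Finset.mem_Icc] at hi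
      have ha := hπ i (by simp only [Finset.mem_Icc]; omega)
      have hb := hπ (i+1) (by simp only [Finset.mem_Icc]; omega)
      simp only [Finset.mem_Icc] at ha hb
      have hne : π i ≠ π (i+1) := fun h => by have := π.injective h; omega
      rcases Nat.lt_or_ge (π i) (π (i+1)) with hab | hge
      · -- ascending case : R d := i < σ d
        obtain ⟨c, hc1, hc2, hc3⟩ := thresh (π i) (π (i+1)) hab (fun d => i < π.symm d)
          (by
            intro d hd1 hd2 hRd
            by_contra h
            push_neg at h
            exact hnw ⟨i, by simp only [Finset.mem_Icc]; omega,
              d, by simp only [Finset.mem_Icc]; omega,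
              ⟨by omega, by omega, by omega, by omega⟩, Or.inr ⟨hRd, by omega⟩⟩)
        refine ⟨c, by omega, by omega, ?_⟩
        intro d hd1 hd2
        refine ⟨fun _ => ⟨?_, ?_⟩, fun h => absurd h (by omega)⟩
        · intro hdc
          have h1 := (hc3 d (by omega) (by omega)).1 hdc
          have hne1 : π.symm d ≠ i := by
            intro hh; rw [Equiv.symm_apply_eq] at hh; omega
          omega
        · intro hcd
          have h1 := (hc3 d (by omega) (by omega)).2 hcd
          have hne2 : π.symm d ≠ i + 1 := by
            intro hh; rw [Equiv.symm_apply_eq] at hh; omega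
          omega
      · have hba : π (i+1) < π i := by omega
        -- descending case : R d := σ d ≤ i
        obtain ⟨c, hc1, hc2, hc3⟩ := thresh (π (i+1)) (π i) hba (fun d => π.symm d ≤ i)
          (by
            intro d hd1 hd2 hRd
            by_contra h
            push_neg at h
            exact hnw ⟨i, by simp only [Finset.mem_Icc]; omega,
              d, by simp only [Finset.mem_Icc]; omega,
              ⟨by omega, by omega, by omega, by omega⟩, Or.inl ⟨by omega, by omega⟩⟩)
        refine ⟨c, by omega, by omega, ?_⟩
        intro d hd1 hd2
        refine ⟨fun h => absurd h (by omega), fun _ => ⟨?_, ?_⟩⟩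
        · intro hdc
          have h1 := (hc3 d (by omega) (by omega)).1 hdc
          have hne1 : π.symm d ≠ i + 1 := by
            intro hh; rw [Equiv.symm_apply_eq] at hh; omega
          omega
        · intro hcd
          have h1 := (hc3 d (by omega) (by omega)).2 hcd
          have hne2 : π.symm d ≠ i := by
            intro hh; rw [Equiv.symm_apply_eq] at hh; omega
          omega
  have amat : ∀ i j, AMat (⇑π) (⇑π.symm) i j = -1 ↔ Windmilled (⇑π) (⇑π.symm) i j := by
    intro i j
    unfold AMat
    split_ifs with h1 h2 <;> simp [h1]
  refine ⟨key, key.trans ?_⟩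
  constructor <;> intro h
  · rintro ⟨i, hi, j, hj, hw⟩
    exact h ⟨i, hi, j, hj, (amat i j).mp hw⟩
  · rintro ⟨i, hi, j, hj, hw⟩
    exact h ⟨i, hi, j, hj, (amat i j).mpr hw⟩
end

section
/- Let n ≥ 1, let π be a permutation of {1, …, n+1} with inverse σ, and fix i ∈ {1, …, n}. Set a = π(i) and b = π(i+1). Then the following are equivalent: (1) there exists c with min(a,b) ≤ c < max(a,b) such that for every d with min(a,b) < d < max(a,b): when a < b, d ≤ c implies σ(d) < i and d > c implies σ(d) > i+1, and when a > b, d ≤ c implies σ(d) > i+1 and d > c implies σ(d) < i; (2) there is exactly one j ∈ {1, …, n} such that (i,j) is a box for π. -/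
lemma crossing_aux (s : ℕ → Prop) {a : ℕ} :
    ∀ d, a ≤ d → s a → ¬ s d → ∃ j, a ≤ j ∧ j < d ∧ s j ∧ ¬ s (j+1) := by
  intro d
  induction d with
  | zero =>
    intro h hs hns
    have : a = 0 := by omega
    subst this; exact absurd hs hns
  | succ d ih =>
    intro h hs hns
    rcases Nat.lt_or_ge a (d+1) with h' | h'
    · by_cases hd : s d
      · exact ⟨d, by omega, by omega, hd, hns⟩
      · obtain ⟨j, h1, h2, h3, h4⟩ := ih (by omega) hs hd
        exact ⟨j, h1, by omega, h3, h4⟩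
    · have : a = d + 1 := by omega
      subst this; exact absurd hs hns

lemma key_asc (σ : ℕ → ℕ) (hinj : ∀ x y, σ x = σ y → x = y) (i m M : ℕ)
    (hmM : m < M) (hm : σ m = i) (hM : σ M = i + 1) :
    (∃ c, m ≤ c ∧ c < M ∧ ∀ d, m < d → d < M →
        (d ≤ c → σ d < i) ∧ (c < d → σ d > i + 1)) ↔
    (∃! j, m ≤ j ∧ j < M ∧ ((σ j ≤ i ∧ i < σ (j+1)) ∨ (σ (j+1) ≤ i ∧ i < σ j))) := by
  constructor
  · rintro ⟨c, hc1, hc2, hd⟩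
    have hσc : σ c ≤ i := by
      rcases eq_or_lt_of_le hc1 with h | h
      · rw [← h, hm]
      · exact le_of_lt ((hd c h hc2).1 le_rfl)
    have hσc1 : i < σ (c+1) := by
      rcases eq_or_lt_of_le (show c + 1 ≤ M by omega) with h | h
      · rw [h, hM]; omega
      · have := (hd (c+1) (by omega) h).2 (by omega); omega
    refine ⟨c, ⟨hc1, hc2, Or.inl ⟨hσc, hσc1⟩⟩, ?_⟩
    rintro j ⟨hj1, hj2, hj3⟩
    by_contra hne
    rcases Nat.lt_or_ge j c with h | h
    · have h1 : σ j ≤ i := by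
        rcases eq_or_lt_of_le hj1 with h' | h'
        · rw [← h', hm]
        · exact le_of_lt ((hd j h' hj2).1 (by omega))
      have h2 : σ (j+1) ≤ i := le_of_lt ((hd (j+1) (by omega) (by omega)).1 (by omega))
      omega
    · have hjc : c < j := by omega
      have h1 : i + 1 < σ j := (hd j (by omega) hj2).2 hjc
      have h2 : i + 1 ≤ σ (j+1) := by
        rcases eq_or_lt_of_le (show j + 1 ≤ M by omega) with h' | h'
        · rw [h', hM]
        · exact le_of_lt ((hd (j+1) (by omega) h').2 (by omega))
      omega
  · rintro ⟨c, ⟨hc1, hc2, hc3⟩, huniq⟩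
    refine ⟨c, hc1, hc2, ?_⟩
    intro d hd1 hd2
    constructor
    · intro hdc
      by_contra h
      have hne : σ d ≠ i := fun he => by have := hinj _ _ (he.trans hm.symm); omega
      have hsd : ¬ (σ d ≤ i) := by omega
      obtain ⟨j, h1, h2, h3, h4⟩ :=
        crossing_aux (fun x => σ x ≤ i) d (le_of_lt hd1) (by simp [hm]) hsd
      have hjc : j = c := huniq j ⟨by omega, by omega, Or.inl ⟨h3, by omega⟩⟩
      omega
    · intro hcd
      by_contra h
      have hne : σ d ≠ i + 1 := fun he => by have := hinj _ _ (he.trans hM.symm); omega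
      have hsd : σ d ≤ i := by omega
      have hsM : ¬ (σ M ≤ i) := by omega
      obtain ⟨j, h1, h2, h3, h4⟩ :=
        crossing_aux (fun x => σ x ≤ i) M (le_of_lt hd2) hsd hsM
      have hjc : j = c := huniq j ⟨by omega, by omega, Or.inl ⟨h3, by omega⟩⟩
      omega

lemma key_desc (σ : ℕ → ℕ) (hinj : ∀ x y, σ x = σ y → x = y) (i m M : ℕ)
    (hmM : m < M) (hm : σ m = i + 1) (hM : σ M = i) :
    (∃ c, m ≤ c ∧ c < M ∧ ∀ d, m < d → d < M →
        (d ≤ c → σ d > i + 1) ∧ (c < d → σ d < i)) ↔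
    (∃! j, m ≤ j ∧ j < M ∧ ((σ j ≤ i ∧ i < σ (j+1)) ∨ (σ (j+1) ≤ i ∧ i < σ j))) := by
  constructor
  · rintro ⟨c, hc1, hc2, hd⟩
    have hσc : i < σ c := by
      rcases eq_or_lt_of_le hc1 with h | h
      · rw [← h, hm]; omega
      · have := (hd c h hc2).1 le_rfl; omega
    have hσc1 : σ (c+1) ≤ i := by
      rcases eq_or_lt_of_le (show c + 1 ≤ M by omega) with h | h
      · rw [h, hM]
      · exact le_of_lt ((hd (c+1) (by omega) h).2 (by omega))
    refine ⟨c, ⟨hc1, hc2, Or.inr ⟨hσc1, hσc⟩⟩, ?_⟩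
    rintro j ⟨hj1, hj2, hj3⟩
    by_contra hne
    rcases Nat.lt_or_ge j c with h | h
    · have h1 : i < σ j := by
        rcases eq_or_lt_of_le hj1 with h' | h'
        · rw [← h', hm]; omega
        · have := (hd j h' hj2).1 (by omega); omega
      have h2 : i + 1 < σ (j+1) := (hd (j+1) (by omega) (by omega)).1 (by omega)
      omega
    · have hjc : c < j := by omega
      have h1 : σ j < i := (hd j (by omega) hj2).2 hjc
      have h2 : σ (j+1) ≤ i := by
        rcases eq_or_lt_of_le (show j + 1 ≤ M by omega) with h' | h'
        · rw [h', hM]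
        · exact le_of_lt ((hd (j+1) (by omega) h').2 (by omega))
      omega
  · rintro ⟨c, ⟨hc1, hc2, hc3⟩, huniq⟩
    refine ⟨c, hc1, hc2, ?_⟩
    intro d hd1 hd2
    constructor
    · intro hdc
      by_contra h
      have hne : σ d ≠ i + 1 := fun he => by have := hinj _ _ (he.trans hm.symm); omega
      have hsd : σ d ≤ i := by omega
      have hsm : ¬ (σ m ≤ i) := by omega
      obtain ⟨j, h1, h2, h3, h4⟩ :=
        crossing_aux (fun x => ¬ (σ x ≤ i)) d (le_of_lt hd1) hsm (by simpa using hsd)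
      have hjc : j = c := huniq j ⟨by omega, by omega, Or.inr ⟨by simpa using h4, by omega⟩⟩
      omega
    · intro hcd
      by_contra h
      have hne : σ d ≠ i := fun he => by have := hinj _ _ (he.trans hM.symm); omega
      have hsd : ¬ (σ d ≤ i) := by omega
      have hsM : σ M ≤ i := by omega
      obtain ⟨j, h1, h2, h3, h4⟩ :=
        crossing_aux (fun x => ¬ (σ x ≤ i)) M (le_of_lt hd2) hsd (by simpa using hsM)
      have hjc : j = c := huniq j ⟨by omega, by omega, Or.inr ⟨by simpa using h4, by omega⟩⟩
      omega

theorem stmt13 (n : ℕ) (hn : 1 ≤ n) (π : Equiv.Perm ℕ)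
    (hπ : ∀ k ∈ Finset.Icc 1 (n+1), π k ∈ Finset.Icc 1 (n+1))
    (i : ℕ) (hi : i ∈ Finset.Icc 1 n) :
    (∃ c, min (π i) (π (i+1)) ≤ c ∧ c < max (π i) (π (i+1)) ∧
      ∀ d, min (π i) (π (i+1)) < d → d < max (π i) (π (i+1)) →
        (π i < π (i+1) → (d ≤ c → π.symm d < i) ∧ (c < d → π.symm d > i + 1)) ∧
        (π (i+1) < π i → (d ≤ c → π.symm d > i + 1) ∧ (c < d → π.symm d < i))) ↔
    (∃! j, j ∈ Finset.Icc 1 n ∧ IsBox (⇑π) (⇑π.symm) i j) := by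
  simp only [Finset.mem_Icc] at hi
  have h1 := hπ i (by simp only [Finset.mem_Icc]; omega)
  have h2 := hπ (i+1) (by simp only [Finset.mem_Icc]; omega)
  simp only [Finset.mem_Icc] at h1 h2
  have hinj : ∀ x y, π.symm x = π.symm y → x = y := fun x y h => π.symm.injective h
  have hab : π i ≠ π (i+1) := fun h => by have := π.injective h; omega
  have hA : π.symm (π i) = i := π.symm_apply_apply i
  have hB : π.symm (π (i+1)) = i + 1 := π.symm_apply_apply (i+1)
  rcases Nat.lt_or_ge (π i) (π (i+1)) with hlt | hge
  · refine Iff.trans ?_ ((key_asc (⇑π.symm) hinj i (π i) (π (i+1)) hlt hA hB).trans ?_)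
    · constructor
      · rintro ⟨c, hc1, hc2, hd⟩
        exact ⟨c, by omega, by omega,
          fun d hd1 hd2 => (hd d (by omega) (by omega)).1 hlt⟩
      · rintro ⟨c, hc1, hc2, hd⟩
        exact ⟨c, by omega, by omega,
          fun d hd1 hd2 => ⟨fun _ => hd d (by omega) (by omega),
            fun h => absurd h (by omega)⟩⟩
    · apply existsUnique_congr
      intro j
      simp only [IsBox, Finset.mem_Icc]
      omega
  · have hgt : π (i+1) < π i := by omega
    refine Iff.trans ?_ ((key_desc (⇑π.symm) hinj i (π (i+1)) (π i) hgt hB hA).trans ?_)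
    · constructor
      · rintro ⟨c, hc1, hc2, hd⟩
        exact ⟨c, by omega, by omega,
          fun d hd1 hd2 => (hd d (by omega) (by omega)).2 hgt⟩
      · rintro ⟨c, hc1, hc2, hd⟩
        exact ⟨c, by omega, by omega,
          fun d hd1 hd2 => ⟨fun h => absurd h (by omega),
            fun _ => hd d (by omega) (by omega)⟩⟩
    · apply existsUnique_congr
      intro j
      simp only [IsBox, Finset.mem_Icc]
      omega
end
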